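/- The polynomial P₈₀(z) = (1 − z)¹⁰ − (75/8)(1 − z)⁷ z² + (42525/2048)(1 − z)⁴ z⁴ − (202125/32768)(1 − z) z⁶ is strictly decreasing on the interval [0, 1/4]; in particular its derivative is negative for all z in [0, 1/4]. -/

import Mathlib

/-- Denominator polynomial of the secrecy function of the extremal even
unimodular lattice in dimension 80. -/
noncomputable def P80 (z : ℝ) : ℝ :=
  (1 - z) ^ 10 - 75 / 8 * (1 - z) ^ 7 * z ^ 2 + 42525 / 2048 * (1 - z) ^ 4 * z ^ 4
    - 202125 / 32768 * (1 - z) * z ^ 6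

noncomputable def D80 (z : ℝ) : ℝ :=
  -10 + 285 / 4 * z - 1305 / 8 * z ^ 2 + 69405 / 512 * z ^ 3 - 17745 / 512 * z ^ 4
    + 28665 / 16384 * z ^ 5 - 3045 / 32768 * z ^ 6 + 285 / 256 * z ^ 7 - 45 / 8 * z ^ 8
    + 10 * z ^ 9

lemma P80_hasDerivAt (z : ℝ) : HasDerivAt P80 (D80 z) z := by
  have hu : HasDerivAt (fun z : ℝ => 1 - z) (-1) z := (hasDerivAt_id z).const_sub 1
  have t1 := hu.pow 10
  have t2 := ((hu.pow 7).const_mul (75 / 8 : ℝ)).mul (hasDerivAt_pow 2 z)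
  have t3 := ((hu.pow 4).const_mul (42525 / 2048 : ℝ)).mul (hasDerivAt_pow 4 z)
  have t4 := (hu.const_mul (202125 / 32768 : ℝ)).mul (hasDerivAt_pow 6 z)
  have h : HasDerivAt P80 _ z := ((t1.sub t2).add t3).sub t4
  convert h using 1
  simp only [D80, Pi.pow_apply]; ring

lemma D80_neg {z : ℝ} (h0 : 0 ≤ z) (h1 : z ≤ 1 / 4) : D80 z < 0 := by
  have key : ∀ n : ℕ, z ^ (n + 1) ≤ 1 / 4 * z ^ n := by
    intro n
    calc z ^ (n + 1) = z ^ n * z := by ring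
      _ ≤ z ^ n * (1 / 4) := mul_le_mul_of_nonneg_left h1 (pow_nonneg h0 n)
      _ = 1 / 4 * z ^ n := by ring
  have h3 : z ^ 3 ≤ 1 / 4 * z ^ 2 := key 2
  have h5 : z ^ 5 ≤ 1 / 64 * z ^ 2 := by linarith [key 4, key 3, key 2]
  have h7 : z ^ 7 ≤ 1 / 1024 * z ^ 2 := by
    linarith [key 6, key 5, key 4, key 3, key 2]
  have h9 : z ^ 9 ≤ 1 / 16384 * z ^ 2 := by
    linarith [key 8, key 7, key 6, key 5, key 4, key 3, key 2]
  simp only [D80]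
  nlinarith [pow_nonneg h0 4, pow_nonneg h0 6, pow_nonneg h0 8, sq_nonneg (z - 11/40),
    h3, h5, h7, h9, h0, h1]

theorem P80_strictAnti :
    StrictAntiOn P80 (Set.Icc (0 : ℝ) (1 / 4)) ∧
      ∀ z ∈ Set.Icc (0 : ℝ) (1 / 4), deriv P80 z < 0 := by
  have hderiv : ∀ z : ℝ, deriv P80 z = D80 z := fun z => (P80_hasDerivAt z).deriv
  constructor
  · apply strictAntiOn_of_deriv_neg (convex_Icc _ _)
    · exact fun z _ => (P80_hasDerivAt z).continuousAt.continuousWithinAt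
    · intro z hz
      rw [interior_Icc] at hz
      rw [hderiv]
      exact D80_neg hz.1.le hz.2.le
  · intro z hz
    rw [hderiv]
    exact D80_neg hz.1 hz.2
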